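/- Strict dissipativity of regularity-gain type: there exists a constant c₀ > 0 such that for every ξ ∈ ℝ, every λ ∈ ℂ satisfying det(λ·A⁰ + i·ξ·A(ξ) + ξ²·B) = 0 (the real matrices regarded as complex matrices) obeys Re λ ≤ −c₀·ξ². In particular Re λ < 0 for all ξ ≠ 0, i.e., the linearized Navier–Stokes–Fourier–Korteweg operator is strictly dissipative. -/

import Mathlib

set_option maxHeartbeats 2000000


open Matrix


private lemma nsfk_sq_bound (w z p cc dd ee ff L : ℝ)
    (h : L = (w*dd + z*cc + p*ee)^2 + (w*cc - z*dd - p*ff)^2) :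
    L ≤ 2*(w^2+z^2)*(cc^2+dd^2) + 2*p^2*(ee^2+ff^2) := by
  nlinarith [sq_nonneg (w*dd + z*cc - p*ee), sq_nonneg (w*cc - z*dd + p*ff)]

private lemma nsfk_aux (ρ θ pρ pθ eθ k μ α ξ zr zi X0 X1 X2 c₀ : ℝ)
    (hρ : 0 < ρ) (hθ : 0 < θ) (hpρ : 0 < pρ) (hpθ : 0 < pθ) (heθ : 0 < eθ)
    (hk : 0 < k) (hμ : 0 < μ) (hα : 0 < α)
    (hξ2 : 0 < ξ^2) (hX0 : 0 ≤ X0) (hX1 : 0 ≤ X1) (hX2 : 0 ≤ X2)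
    (hc1 : 0 < c₀) (hcle1 : c₀ ≤ 1)
    (hcC1 : c₀ * (2*(ρ*α + eθ*ρ*μ)) ≤ μ*α)
    (hcN : c₀*(2*(16*k*ρ^5*α*pρ + 16*μ^3*ρ*α*pρ + 8*θ*pθ^2*μ^2*k*ρ^2)) ≤ μ^2*k*ρ^3*α*pρ)
    (hI : zr*(θ*(pρ+ξ^2*k*ρ)*X0 + θ*ρ^2*X1 + eθ*ρ^2*X2) + ξ^2*(θ*ρ*μ*X1 + ρ*α*X2) = 0)
    (hEpos : 0 < (θ*(pρ+ξ^2*k*ρ)*X0 + θ*ρ^2*X1 + eθ*ρ^2*X2))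
    (hII : (zr^2+zi^2)*X0 = ξ^2*ρ^2*X1)
    (hIII : ξ^2*(pρ+ξ^2*k*ρ)^2*X0
      ≤ 2*((zr*ρ+ξ^2*μ)^2 + zi^2*ρ^2)*X1 + 2*ξ^2*pθ^2*X2)
    (hcon : -c₀*ξ^2 < zr) : False := by
  have hcE : 0 ≤ zr + c₀*ξ^2 := by linarith
  have hD : ξ^2*(θ*ρ*μ*X1 + ρ*α*X2) ≤ ξ^2*(c₀*(θ*(pρ+ξ^2*k*ρ)*X0 + θ*ρ^2*X1 + eθ*ρ^2*X2)) := by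
    linarith only [hI, mul_nonneg hcE hEpos.le]
  have hD' : θ*ρ*μ*X1 + ρ*α*X2 ≤ c₀*(θ*(pρ+ξ^2*k*ρ)*X0 + θ*ρ^2*X1 + eθ*ρ^2*X2) := le_of_mul_le_mul_left hD hξ2
  have hx1b : θ*ρ*μ*X1 ≤ c₀*(θ*(pρ+ξ^2*k*ρ)*X0 + θ*ρ^2*X1 + eθ*ρ^2*X2) := by
    linarith only [hD', mul_nonneg (mul_nonneg hρ.le hα.le) hX2]
  have hx2b : ρ*α*X2 ≤ c₀*(θ*(pρ+ξ^2*k*ρ)*X0 + θ*ρ^2*X1 + eθ*ρ^2*X2) := by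
    linarith only [hD', mul_nonneg (mul_nonneg (mul_nonneg hθ.le hρ.le) hμ.le) hX1]
  have h1'' : (0:ℝ) ≤ θ*pρ*X0 := by positivity
  have h2'' : (0:ℝ) ≤ θ*ρ^2*X1 := by positivity
  have h3'' : (0:ℝ) ≤ eθ*ρ^2*X2 := by positivity
  have h4'' : (0:ℝ) ≤ ξ^2*(θ*k*ρ*X0) := by positivity
  have hkX0 : ξ^2*(θ*k*ρ*X0) ≤ (θ*(pρ+ξ^2*k*ρ)*X0 + θ*ρ^2*X1 + eθ*ρ^2*X2) := by
    linarith only [h1'', h2'', h3'']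
  have hpX0 : θ*pρ*X0 ≤ (θ*(pρ+ξ^2*k*ρ)*X0 + θ*ρ^2*X1 + eθ*ρ^2*X2) := by
    linarith only [h2'', h3'', h4'']
  have key : μ*α*(θ*(pρ+ξ^2*k*ρ)*X0 + θ*ρ^2*X1 + eθ*ρ^2*X2) ≤ μ*α*(2*(θ*(pρ+ξ^2*k*ρ)*X0)) := by
    linarith only [mul_le_mul_of_nonneg_left hx1b (by positivity : (0:ℝ) ≤ ρ*α),
      mul_le_mul_of_nonneg_left hx2b (by positivity : (0:ℝ) ≤ eθ*ρ*μ),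
      mul_le_mul_of_nonneg_right hcC1 hEpos.le]
  have hB : (θ*(pρ+ξ^2*k*ρ)*X0 + θ*ρ^2*X1 + eθ*ρ^2*X2) ≤ 2*(θ*(pρ+ξ^2*k*ρ)*X0) := le_of_mul_le_mul_left key (by positivity)
  have hW : (zr*ρ+ξ^2*μ)^2 ≤ 2*zr^2*ρ^2 + 2*ξ^4*μ^2 := by
    nlinarith [sq_nonneg (zr*ρ - ξ^2*μ)]
  have hIII2 : ξ^2*(pρ+ξ^2*k*ρ)^2*X0
      ≤ 4*(zr^2+zi^2)*ρ^2*X1 + 4*ξ^4*μ^2*X1 + 2*ξ^2*pθ^2*X2 := by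
    linarith only [hIII, mul_le_mul_of_nonneg_right hW hX1,
      mul_nonneg (mul_nonneg (sq_nonneg zi) (sq_nonneg ρ)) hX1]
  have hII4 : 4*ρ^2*X1*((zr^2+zi^2)*X0) = 4*ρ^2*X1*(ξ^2*ρ^2*X1) := by rw [hII]
  have hstar : ξ^2*((pρ+ξ^2*k*ρ)^2*X0^2)
      ≤ ξ^2*(4*ρ^4*X1^2 + 4*ξ^2*μ^2*X1*X0 + 2*pθ^2*X2*X0) := by
    linarith only [mul_le_mul_of_nonneg_right hIII2 hX0, hII4]
  have bstar : (pρ+ξ^2*k*ρ)^2*X0^2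
      ≤ 4*ρ^4*X1^2 + 4*ξ^2*μ^2*X1*X0 + 2*pθ^2*X2*X0 := le_of_mul_le_mul_left hstar hξ2
  have hEsq : (θ*(pρ+ξ^2*k*ρ)*X0 + θ*ρ^2*X1 + eθ*ρ^2*X2)^2 ≤ 4*θ^2*((pρ+ξ^2*k*ρ)^2*X0^2) := by
    linarith only [mul_self_le_mul_self hEpos.le hB]
  have P1 : θ^2*ρ^2*μ^2*X1^2 ≤ c₀*(θ*(pρ+ξ^2*k*ρ)*X0 + θ*ρ^2*X1 + eθ*ρ^2*X2)^2 := by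
    linarith only [mul_self_le_mul_self (by positivity : (0:ℝ) ≤ θ*ρ*μ*X1) hx1b,
      mul_nonneg (by linarith only [hcle1] : (0:ℝ) ≤ 1 - c₀)
        (mul_nonneg hc1.le (sq_nonneg (θ*(pρ+ξ^2*k*ρ)*X0 + θ*ρ^2*X1 + eθ*ρ^2*X2)))]
  have P2 : ξ^2*θ^2*k*ρ^2*μ*X1*X0 ≤ c₀*(θ*(pρ+ξ^2*k*ρ)*X0 + θ*ρ^2*X1 + eθ*ρ^2*X2)^2 := by
    linarith only [mul_le_mul hx1b hkX0 (by positivity) (mul_nonneg hc1.le hEpos.le)]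
  have P3 : ρ*α*θ*pρ*X2*X0 ≤ c₀*(θ*(pρ+ξ^2*k*ρ)*X0 + θ*ρ^2*X1 + eθ*ρ^2*X2)^2 := by
    linarith only [mul_le_mul hx2b hpX0 (by positivity) (mul_nonneg hc1.le hEpos.le)]
  have F1 := mul_le_mul_of_nonneg_left bstar
    (by positivity : (0:ℝ) ≤ 4*θ^2*(μ^2*k*ρ^3*α*pρ))
  have F2 := mul_le_mul_of_nonneg_left hEsq
    (by positivity : (0:ℝ) ≤ μ^2*k*ρ^3*α*pρ)
  have P1' := mul_le_mul_of_nonneg_left P1 (by positivity : (0:ℝ) ≤ 16*k*ρ^5*α*pρ)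
  have P2' := mul_le_mul_of_nonneg_left P2 (by positivity : (0:ℝ) ≤ 16*μ^3*ρ*α*pρ)
  have P3' := mul_le_mul_of_nonneg_left P3 (by positivity : (0:ℝ) ≤ 8*θ*pθ^2*μ^2*k*ρ^2)
  have hcNE := mul_le_mul_of_nonneg_right hcN (sq_nonneg (θ*(pρ+ξ^2*k*ρ)*X0 + θ*ρ^2*X1 + eθ*ρ^2*X2))
  have hfin : (0:ℝ) < μ^2*k*ρ^3*α*pρ*(θ*(pρ+ξ^2*k*ρ)*X0 + θ*ρ^2*X1 + eθ*ρ^2*X2)^2 := by positivity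
  linarith only [F1, F2, P1', P2', P3', hcNE, hfin]

/-- Strict dissipativity of regularity-gain type: every root `λ` of the dispersion
relation `det(λA⁰ + iξA(ξ) + ξ²B) = 0` satisfies `Re λ ≤ −c₀ξ²`; in particular
`Re λ < 0` for all `ξ ≠ 0`. -/
theorem nsfk_strictly_dissipative (ρ θ pρ pθ eθ k μ α u : ℝ)
    (hρ : 0 < ρ) (hθ : 0 < θ) (hpρ : 0 < pρ) (hpθ : 0 < pθ) (heθ : 0 < eθ)
    (hk : 0 < k) (hμ : 0 < μ) (hα : 0 < α) :
    ∃ c₀ : ℝ, 0 < c₀ ∧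
      ∀ ξ : ℝ, ∀ lam : ℂ,
        (let β : ℝ := pρ + ξ ^ 2 * k * ρ
         let A0 : Matrix (Fin 3) (Fin 3) ℂ :=
          ((1 / θ) • !![pρ / ρ, 0, 0; 0, ρ, 0; 0, 0, eθ * ρ / θ]).map
            (fun x : ℝ => (x : ℂ))
         let A : Matrix (Fin 3) (Fin 3) ℂ :=
          ((1 / θ) • !![pρ * u / ρ, pρ, 0; β, ρ * u, pθ; 0, pθ, ρ * u * eθ / θ]).map
            (fun x : ℝ => (x : ℂ))
         let B : Matrix (Fin 3) (Fin 3) ℂ :=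
          ((1 / θ) • !![0, 0, 0; 0, μ, 0; 0, 0, α / θ]).map
            (fun x : ℝ => (x : ℂ))
         (lam • A0 + (Complex.I * (ξ : ℂ)) • A + ((ξ : ℂ) ^ 2) • B).det = 0) →
        (lam.re ≤ -c₀ * ξ ^ 2 ∧ (ξ ≠ 0 → lam.re < 0)) := by
  -- explicit constants
  set C1 : ℝ := μ*α/(2*(ρ*α + eθ*ρ*μ)) with hC1def
  set N : ℝ := 16*k*ρ^5*α*pρ + 16*μ^3*ρ*α*pρ + 8*θ*pθ^2*μ^2*k*ρ^2 with hNdef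
  set Dd : ℝ := μ^2*k*ρ^3*α*pρ with hDdef
  have hC1pos : 0 < C1 := by rw [hC1def]; positivity
  have hNpos : 0 < N := by rw [hNdef]; positivity
  have hDpos : 0 < Dd := by rw [hDdef]; positivity
  refine ⟨min 1 (min C1 (Dd/(2*N))), by positivity, ?_⟩
  set c₀ : ℝ := min 1 (min C1 (Dd/(2*N))) with hc₀def
  have hc1 : 0 < c₀ := by rw [hc₀def]; positivity
  have hcle1 : c₀ ≤ 1 := min_le_left _ _
  have hcC1 : c₀ * (2*(ρ*α + eθ*ρ*μ)) ≤ μ*α := by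
    have h : c₀ ≤ C1 := le_trans (min_le_right _ _) (min_le_left _ _)
    rw [hC1def] at h
    exact (le_div_iff₀ (by positivity)).mp h
  have hcN : c₀ * (2*N) ≤ Dd := by
    have h : c₀ ≤ Dd/(2*N) := le_trans (min_le_right _ _) (min_le_right _ _)
    exact (le_div_iff₀ (by positivity)).mp h
  intro ξ lam hdet
  simp only at hdet
  rw [← Matrix.exists_mulVec_eq_zero_iff] at hdet
  obtain ⟨v, hv, hmv⟩ := hdet
  have h0 := congrFun hmv 0
  have h1 := congrFun hmv 1
  have h2 := congrFun hmv 2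
  simp [Matrix.mulVec, dotProduct, Fin.sum_univ_three, Matrix.add_apply, Matrix.smul_apply,
    Matrix.map_apply, smul_eq_mul] at h0 h1 h2
  have hθC : (θ:ℂ) ≠ 0 := Complex.ofReal_ne_zero.mpr (ne_of_gt hθ)
  have hρC : (ρ:ℂ) ≠ 0 := Complex.ofReal_ne_zero.mpr (ne_of_gt hρ)
  have hpρC : (pρ:ℂ) ≠ 0 := Complex.ofReal_ne_zero.mpr (ne_of_gt hpρ)
  field_simp at h0 h1 h2
  have h0r := congrArg Complex.re h0
  have h0i := congrArg Complex.im h0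
  have h1r := congrArg Complex.re h1
  have h1i := congrArg Complex.im h1
  have h2r := congrArg Complex.re h2
  have h2i := congrArg Complex.im h2
  simp only [← Complex.ofReal_pow, Complex.add_re, Complex.add_im, Complex.mul_re,
    Complex.mul_im, Complex.I_re, Complex.I_im, Complex.ofReal_re, Complex.ofReal_im,
    Complex.zero_re, Complex.zero_im] at h0r h0i h1r h1i h2r h2i
  set a := (v 0).re with hadef
  set b := (v 0).im with hbdef
  set c := (v 1).re with hcdef
  set d := (v 1).im with hddef
  set e := (v 2).re with hedef
  set f := (v 2).im with hfdef
  -- clean real equations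
  have e1r : lam.re*a - (lam.im+ξ*u)*b - ξ*ρ*d = 0 := by
    have h : θ*pρ*(lam.re*a - (lam.im+ξ*u)*b - ξ*ρ*d) = θ*pρ*0 := by linear_combination θ * h0r
    exact mul_left_cancel₀ (by positivity) h
  have e1i : lam.re*b + (lam.im+ξ*u)*a + ξ*ρ*c = 0 := by
    have h : θ*pρ*(lam.re*b + (lam.im+ξ*u)*a + ξ*ρ*c) = θ*pρ*0 := by linear_combination θ * h0i
    exact mul_left_cancel₀ (by positivity) h
  have e2r : -(ξ*(pρ + ξ^2*k*ρ)*b) + (lam.re*ρ+ξ^2*μ)*c - (lam.im+ξ*u)*ρ*d - ξ*pθ*f = 0 := by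
    linear_combination h1r
  have e2i : ξ*(pρ + ξ^2*k*ρ)*a + (lam.re*ρ+ξ^2*μ)*d + (lam.im+ξ*u)*ρ*c + ξ*pθ*e = 0 := by
    linear_combination h1i
  have e3r : -(ξ*θ*pθ*d) + (lam.re*eθ*ρ+ξ^2*α)*e - (lam.im+ξ*u)*eθ*ρ*f = 0 := by
    have h : θ*(-(ξ*θ*pθ*d) + (lam.re*eθ*ρ+ξ^2*α)*e - (lam.im+ξ*u)*eθ*ρ*f) = θ*0 := by
      linear_combination θ * h2r
    exact mul_left_cancel₀ (by positivity) h
  have e3i : ξ*θ*pθ*c + (lam.re*eθ*ρ+ξ^2*α)*f + (lam.im+ξ*u)*eθ*ρ*e = 0 := by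
    have h : θ*(ξ*θ*pθ*c + (lam.re*eθ*ρ+ξ^2*α)*f + (lam.im+ξ*u)*eθ*ρ*e) = θ*0 := by
      linear_combination θ * h2i
    exact mul_left_cancel₀ (by positivity) h
  clear h0 h1 h2 h0r h0i h1r h1i h2r h2i hmv
  -- energy identity
  have hI : lam.re*(θ*(pρ + ξ^2*k*ρ)*(a^2+b^2) + θ*ρ^2*(c^2+d^2) + eθ*ρ^2*(e^2+f^2))
      + ξ^2*(θ*ρ*μ*(c^2+d^2) + ρ*α*(e^2+f^2)) = 0 := by
    linear_combination (θ*(pρ + ξ^2*k*ρ)*a)*e1r + (θ*(pρ + ξ^2*k*ρ)*b)*e1i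
      + (θ*ρ*c)*e2r + (θ*ρ*d)*e2i + (ρ*e)*e3r + (ρ*f)*e3i
  -- positivity of the energy
  have hβ : 0 < pρ + ξ^2*k*ρ := by positivity
  have hEpos : 0 < θ*(pρ + ξ^2*k*ρ)*(a^2+b^2) + θ*ρ^2*(c^2+d^2) + eθ*ρ^2*(e^2+f^2) := by
    obtain ⟨i, hvi⟩ := Function.ne_iff.mp hv
    have hns := Complex.normSq_pos.mpr hvi
    rw [Complex.normSq_apply] at hns
    have h1' : (0:ℝ) ≤ θ*(pρ + ξ^2*k*ρ)*(a^2+b^2) := by positivity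
    have h2' : (0:ℝ) ≤ θ*ρ^2*(c^2+d^2) := by positivity
    have h3' : (0:ℝ) ≤ eθ*ρ^2*(e^2+f^2) := by positivity
    fin_cases i
    · have hx : 0 < a^2+b^2 := by rw [hadef, hbdef]; simpa [pow_two] using hns
      have := mul_pos (mul_pos hθ hβ) hx
      linarith
    · have hx : 0 < c^2+d^2 := by rw [hcdef, hddef]; simpa [pow_two] using hns
      have := mul_pos (mul_pos hθ (by positivity : (0:ℝ) < ρ^2)) hx
      linarith
    · have hx : 0 < e^2+f^2 := by rw [hedef, hfdef]; simpa [pow_two] using hns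
      have := mul_pos (mul_pos heθ (by positivity : (0:ℝ) < ρ^2)) hx
      linarith
  have hcN' : c₀*(2*(16*k*ρ^5*α*pρ + 16*μ^3*ρ*α*pρ + 8*θ*pθ^2*μ^2*k*ρ^2))
      ≤ μ^2*k*ρ^3*α*pρ := by rw [hNdef, hDdef] at hcN; exact hcN
  have main : lam.re ≤ -c₀*ξ^2 := by
    by_cases hξ0 : ξ = 0
    · subst hξ0
      have h' : lam.re * (θ*(pρ + 0^2*k*ρ)*(a^2+b^2) + θ*ρ^2*(c^2+d^2) + eθ*ρ^2*(e^2+f^2))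
          = 0 := by linear_combination hI
      have h'' : lam.re = 0 := (mul_eq_zero.mp h').resolve_right (ne_of_gt hEpos)
      rw [h'']; norm_num
    · by_contra hcon
      push_neg at hcon
      have hξ2 : 0 < ξ^2 := lt_of_le_of_ne (sq_nonneg ξ) (Ne.symm (pow_ne_zero 2 hξ0))
      have hII : (lam.re^2 + (lam.im+ξ*u)^2)*(a^2+b^2) = ξ^2*ρ^2*(c^2+d^2) := by
        linear_combination (lam.re*a - (lam.im+ξ*u)*b + ξ*ρ*d)*e1r
          + (lam.re*b + (lam.im+ξ*u)*a - ξ*ρ*c)*e1i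
      have hIIIeq : ξ^2*(pρ+ξ^2*k*ρ)^2*(a^2+b^2)
          = ((lam.re*ρ+ξ^2*μ)*d + (lam.im+ξ*u)*ρ*c + ξ*pθ*e)^2
            + ((lam.re*ρ+ξ^2*μ)*c - (lam.im+ξ*u)*ρ*d - ξ*pθ*f)^2 := by
        linear_combination
          (ξ*(pρ+ξ^2*k*ρ)*a - ((lam.re*ρ+ξ^2*μ)*d + (lam.im+ξ*u)*ρ*c + ξ*pθ*e))*e2i
          + (-(ξ*(pρ+ξ^2*k*ρ)*b) - ((lam.re*ρ+ξ^2*μ)*c - (lam.im+ξ*u)*ρ*d - ξ*pθ*f))*e2r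
      have hsb := nsfk_sq_bound (lam.re*ρ+ξ^2*μ) ((lam.im+ξ*u)*ρ) (ξ*pθ) c d e f _ hIIIeq
      have hIIIa : ξ^2*(pρ+ξ^2*k*ρ)^2*(a^2+b^2)
          ≤ 2*((lam.re*ρ+ξ^2*μ)^2 + (lam.im+ξ*u)^2*ρ^2)*(c^2+d^2)
            + 2*ξ^2*pθ^2*(e^2+f^2) := by linarith only [hsb]
      exact nsfk_aux ρ θ pρ pθ eθ k μ α ξ lam.re (lam.im+ξ*u) (a^2+b^2) (c^2+d^2) (e^2+f^2)
        c₀ hρ hθ hpρ hpθ heθ hk hμ hα hξ2 (by positivity) (by positivity) (by positivity)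
        hc1 hcle1 hcC1 hcN' hI hEpos hII hIIIa hcon
  refine ⟨main, fun hξ0 => ?_⟩
  have hξ2 : 0 < ξ^2 := lt_of_le_of_ne (sq_nonneg ξ) (Ne.symm (pow_ne_zero 2 hξ0))
  linarith only [main, mul_pos hc1 hξ2]
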